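/- arXiv:2511.00938 — 2 statements merged into one kernel-verified Lean document; each statement's English description precedes it below -/
import Mathlib

section
/- Fix S > 0, θ ∈ (0,1], γ ∈ [0,1], and A_max > 0. For integrable f : [0,S] → [0,∞) with ∫₀^S f ≤ A_max and ‖f‖_∞ ≤ 2 A_max/S, define p_f(t) := (1−γ)(f(t) + θ A_max/S)/(∫₀^S f + θ A_max) + γ/S. Then for any two such functions f, g, ‖p_f − p_g‖_∞ ≤ (2(1−γ)/A_max)(1/θ + 1/θ²) ‖f − g‖_∞. -/
open MeasureTheory

/-- Lipschitz continuity of the regularized-mixed density with respect to the sup norm: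
`‖p_f − p_g‖_∞ ≤ (2(1−γ)/A_max)(1/θ + 1/θ²) ‖f − g‖_∞`. -/
theorem density_sup_norm_lipschitz
    (S : ℝ) (hS : 0 < S)
    (θ : ℝ) (hθ : θ ∈ Set.Ioc (0 : ℝ) 1)
    (γ : ℝ) (hγ : γ ∈ Set.Icc (0 : ℝ) 1)
    (Amax : ℝ) (hAmax : 0 < Amax)
    (f g : ℝ → ℝ)
    (hfint : IntegrableOn f (Set.Icc 0 S)) (hgint : IntegrableOn g (Set.Icc 0 S))
    (hf0 : ∀ t ∈ Set.Icc (0 : ℝ) S, 0 ≤ f t) (hg0 : ∀ t ∈ Set.Icc (0 : ℝ) S, 0 ≤ g t)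
    (hfA : (∫ t in Set.Icc (0 : ℝ) S, f t) ≤ Amax)
    (hgA : (∫ t in Set.Icc (0 : ℝ) S, g t) ≤ Amax)
    (hfbd : ∀ t ∈ Set.Icc (0 : ℝ) S, f t ≤ 2 * Amax / S)
    (hgbd : ∀ t ∈ Set.Icc (0 : ℝ) S, g t ≤ 2 * Amax / S)
    (pf pg : ℝ → ℝ)
    (hpf : ∀ t, pf t = (1 - γ) * (f t + θ * Amax / S)
        / ((∫ s in Set.Icc (0 : ℝ) S, f s) + θ * Amax) + γ / S)
    (hpg : ∀ t, pg t = (1 - γ) * (g t + θ * Amax / S)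
        / ((∫ s in Set.Icc (0 : ℝ) S, g s) + θ * Amax) + γ / S)
    (ε : ℝ) (hε : ∀ t ∈ Set.Icc (0 : ℝ) S, |f t - g t| ≤ ε) :
    ∀ t ∈ Set.Icc (0 : ℝ) S,
      |pf t - pg t| ≤ (2 * (1 - γ) / Amax) * (1 / θ + 1 / θ ^ 2) * ε := by
  intro t ht
  have hγ1 : 0 ≤ 1 - γ := by linarith [hγ.2]
  have hθ0 : 0 < θ := hθ.1
  have hθ1 : θ ≤ 1 := hθ.2
  set If := ∫ s in Set.Icc (0:ℝ) S, f s with hIfdef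
  set Ig := ∫ s in Set.Icc (0:ℝ) S, g s with hIgdef
  have hIf0 : 0 ≤ If := setIntegral_nonneg measurableSet_Icc hf0
  have hIg0 : 0 ≤ Ig := setIntegral_nonneg measurableSet_Icc hg0
  have hθA : 0 < θ * Amax := by positivity
  have hDf : 0 < If + θ * Amax := by linarith
  have hDg : 0 < Ig + θ * Amax := by linarith
  have hε0 : 0 ≤ ε := le_trans (abs_nonneg _) (hε 0 ⟨le_refl 0, le_of_lt hS⟩)
  -- bound on the difference of integrals
  have hint : |If - Ig| ≤ S * ε := by
    have h1 : If - Ig = ∫ s in Set.Icc (0:ℝ) S, (f s - g s) :=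
      (integral_sub hfint hgint).symm
    have h2 : |∫ s in Set.Icc (0:ℝ) S, (f s - g s)| ≤
        ∫ s in Set.Icc (0:ℝ) S, |f s - g s| :=
      by simpa using norm_integral_le_integral_norm (μ := volume.restrict (Set.Icc (0:ℝ) S)) (fun s => f s - g s)
    have h3 : (∫ s in Set.Icc (0:ℝ) S, |f s - g s|) ≤
        ∫ s in Set.Icc (0:ℝ) S, ε := by
      apply setIntegral_mono_on (hfint.sub hgint).abs (integrableOn_const (by
        rw [Real.volume_Icc]; exact ENNReal.ofReal_ne_top)) measurableSet_Icc
      intro s hs; exact hε s hs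
    have h4 : (∫ s in Set.Icc (0:ℝ) S, ε) = S * ε := by
      rw [setIntegral_const, measureReal_def, Real.volume_Icc, ENNReal.toReal_ofReal (by linarith)]
      simp [smul_eq_mul, mul_comm]
    rw [h1]; linarith
  set c := θ * Amax / S with hcdef
  have hc0 : 0 ≤ c := by positivity
  have hgc : 0 ≤ g t + c := add_nonneg (hg0 t ht) hc0
  have key : pf t - pg t = (1 - γ) *
      ((f t - g t) / (If + θ * Amax)
        - (g t + c) * (If - Ig) / ((If + θ * Amax) * (Ig + θ * Amax))) := by
    rw [hpf t, hpg t, hcdef]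
    field_simp
    ring
  rw [key, abs_mul, abs_of_nonneg hγ1]
  have hb1 : |(f t - g t) / (If + θ * Amax)| ≤ ε / (θ * Amax) := by
    rw [abs_div, abs_of_pos hDf]
    exact div_le_div₀ hε0 (hε t ht) hθA (by linarith)
  have hb2 : |(g t + c) * (If - Ig) / ((If + θ * Amax) * (Ig + θ * Amax))| ≤
      (2 * Amax / S + c) * (S * ε) / ((θ * Amax) * (θ * Amax)) := by
    rw [abs_div, abs_of_pos (mul_pos hDf hDg), abs_mul, abs_of_nonneg hgc]
    apply div_le_div₀ (by positivity)
    · exact mul_le_mul (by linarith [hgbd t ht]) hint (abs_nonneg _)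
        (by positivity)
    · positivity
    · exact mul_le_mul (by linarith) (by linarith) (le_of_lt hθA) (le_of_lt hDf)
  have hsum : |(f t - g t) / (If + θ * Amax)
      - (g t + c) * (If - Ig) / ((If + θ * Amax) * (Ig + θ * Amax))| ≤
      ε / (θ * Amax) + (2 * Amax / S + c) * (S * ε) / ((θ * Amax) * (θ * Amax)) := by
    calc _ ≤ |(f t - g t) / (If + θ * Amax)| +
        |(g t + c) * (If - Ig) / ((If + θ * Amax) * (Ig + θ * Amax))| := abs_sub _ _
      _ ≤ _ := add_le_add hb1 hb2
  calc (1 - γ) * |(f t - g t) / (If + θ * Amax)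
      - (g t + c) * (If - Ig) / ((If + θ * Amax) * (Ig + θ * Amax))|
      ≤ (1 - γ) * (ε / (θ * Amax) + (2 * Amax / S + c) * (S * ε) / ((θ * Amax) * (θ * Amax))) :=
        mul_le_mul_of_nonneg_left hsum hγ1
    _ = (2 * (1 - γ) / Amax) * (1 / θ + 1 / θ ^ 2) * ε := by
        rw [hcdef]; field_simp; ring
end

section
/- Let K ~ Binomial(n, π) with π ∈ [0,1] arbitrary, and define p̂ = (1+K)/(n+1). If π itself is a super-uniform random variable (i.e., P(π ≤ α) ≤ α for all α ∈ (0,1)) and, conditional on π, K is Binomial(n, π), then P(p̂ ≤ α) ≤ α for all α ∈ (0,1). -/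
open MeasureTheory intervalIntegral
open scoped ENNReal

lemma binomCdf_eq (n : ℕ) : ∀ m : ℕ, m < n → ∀ p : ℝ,
    ∑ k ∈ Finset.range (m+1), (n.choose k : ℝ) * p^k * (1-p)^(n-k)
      = ((n - m : ℕ) : ℝ) * (n.choose m) * ∫ t in p..1, t^m * (1-t)^(n-m-1) := by
  intro m
  induction m with
  | zero =>
    intro hm p
    have hFTC : ∀ x ∈ Set.uIcc p 1, HasDerivAt (fun t : ℝ => -((1-t)^n / n))
        (x^0 * (1-x)^(n-1)) x := by
      intro x _
      have h1 : HasDerivAt (fun t : ℝ => (1-t)) (-1) x := by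
        simpa using ((hasDerivAt_id x).const_sub 1)
      have h2 : HasDerivAt (fun t : ℝ => (1-t)^n) (n * (1-x)^(n-1) * (-1)) x := h1.pow n
      have h3 := (h2.div_const (n : ℝ)).neg
      have hn0 : (n : ℝ) ≠ 0 := by positivity
      refine h3.congr_deriv ?_
      rw [pow_zero, one_mul]
      field_simp
    have hint : IntervalIntegrable (fun t : ℝ => t^0 * (1-t)^(n-1)) volume p 1 :=
      (Continuous.intervalIntegrable (by continuity) p 1)
    simp only [Nat.sub_zero]
    rw [integral_eq_sub_of_hasDerivAt hFTC hint]
    have hn0 : (n : ℝ) ≠ 0 := by positivity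
    simp only [zero_add, Finset.sum_range_one, Nat.choose_zero_right, Nat.cast_one, pow_zero,
      Nat.sub_zero, one_mul, mul_one, sub_self]
    rw [zero_pow (by omega : n ≠ 0)]
    field_simp
    ring
  | succ m ih =>
    intro hm p
    have hm' : m < n := by omega
    obtain ⟨i, hi⟩ : ∃ i, n - m - 1 = i + 1 := ⟨n - m - 2, by omega⟩
    have e1 : n - (m+1) = i + 1 := by omega
    have e2 : n - (m+1) - 1 = i := by omega
    have e3 : n - m = i + 2 := by omega
    rw [Finset.sum_range_succ, ih hm' p, e2, e1, e3, show i+2-1 = i+1 from rfl]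
    have hc0 : ∀ (a b : ℕ), Continuous (fun t:ℝ => t^a * (1-t)^b) := fun a b =>
      (continuous_pow a).mul ((continuous_const.sub continuous_id).pow b)
    -- integration by parts
    have hFTC : ∀ x ∈ Set.uIcc p 1, HasDerivAt (fun t : ℝ => t^(m+1) * (1-t)^(i+1))
        (((m:ℝ)+1)*(x^m*(1-x)^(i+1)) - ((i:ℝ)+1)*(x^(m+1)*(1-x)^i)) x := by
      intro x _
      have h1 : HasDerivAt (fun t : ℝ => (1-t)) (-1) x := by
        simpa using ((hasDerivAt_id x).const_sub 1)
      have h2 := (hasDerivAt_pow (m+1) x).mul (h1.pow (i+1))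
      refine h2.congr_deriv ?_
      simp only [Nat.add_sub_cancel, Pi.pow_apply]
      push_cast
      ring
    have hc1 : Continuous (fun t : ℝ => ((m:ℝ)+1)*(t^m*(1-t)^(i+1)) - ((i:ℝ)+1)*(t^(m+1)*(1-t)^i)) :=
      (continuous_const.mul (hc0 m (i+1))).sub (continuous_const.mul (hc0 (m+1) i))
    have hib := integral_eq_sub_of_hasDerivAt hFTC (hc1.intervalIntegrable p 1)
    norm_num at hib
    rw [intervalIntegral.integral_sub (f := fun t : ℝ => ((m:ℝ)+1)*(t^m*(1-t)^(i+1)))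
        (g := fun t : ℝ => ((i:ℝ)+1)*(t^(m+1)*(1-t)^i))
        ((continuous_const.mul (hc0 m (i+1))).intervalIntegrable p 1)
        ((continuous_const.mul (hc0 (m+1) i)).intervalIntegrable p 1),
      intervalIntegral.integral_const_mul, intervalIntegral.integral_const_mul] at hib
    have hcast : ((m:ℝ)+1) * (n.choose (m+1)) = ((i:ℝ)+2) * (n.choose m) := by
      have h := Nat.choose_succ_right_eq n m
      rw [e3] at h
      have h2 := congrArg (Nat.cast : ℕ → ℝ) h
      push_cast at h2
      linarith
    push_cast
    linear_combination (↑(n.choose (m+1)) : ℝ) * hib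
      - (∫ x in p..1, x^m*(1-x)^(i+1)) * hcast

/-- Conservativeness of the '+1'-corrected Monte Carlo permutation p-value: if the exact
permutation p-value `π` is super-uniform and, conditionally on `π`, `K ~ Binomial(n, π)`, then
`p̂ = (1+K)/(n+1)` satisfies `P(p̂ ≤ α) ≤ α` for all `α ∈ (0,1)`. -/
theorem mc_pvalue_superuniform
    {Ω : Type*} {mΩ : MeasurableSpace Ω} (μ : Measure Ω) [IsProbabilityMeasure μ]
    (n : ℕ) (hn : 1 ≤ n)
    (π : Ω → ℝ) (hπmeas : Measurable π)
    (hπ : ∀ ω, π ω ∈ Set.Icc (0 : ℝ) 1)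
    (hsuper : ∀ α ∈ Set.Ioo (0 : ℝ) 1, μ {ω | π ω ≤ α} ≤ ENNReal.ofReal α)
    (K : Ω → ℕ) (hKmeas : Measurable K) (hKle : ∀ ω, K ω ≤ n)
    (hbinom : ∀ k : ℕ,
      μ[(fun ω => if K ω = k then (1 : ℝ) else 0) | MeasurableSpace.comap π inferInstance]
        =ᵐ[μ] fun ω => (n.choose k : ℝ) * π ω ^ k * (1 - π ω) ^ (n - k)) :
    ∀ α ∈ Set.Ioo (0 : ℝ) 1,
      μ {ω | (1 + (K ω : ℝ)) / (n + 1) ≤ α} ≤ ENNReal.ofReal α := by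
  intro α hα
  obtain ⟨hα0, hα1⟩ := hα
  have hn1 : (0:ℝ) < (n:ℝ) + 1 := by positivity
  set M := Nat.floor (α * ((n:ℝ)+1)) with hMdef
  have hMle : (M:ℝ) ≤ α * ((n:ℝ)+1) := Nat.floor_le (by positivity)
  have hEvent : {ω | (1 + (K ω : ℝ)) / (n + 1) ≤ α} = {ω | K ω + 1 ≤ M} := by
    ext ω
    simp only [Set.mem_setOf_eq]
    rw [div_le_iff₀ hn1]
    constructor
    · intro h
      exact Nat.le_floor (by push_cast; linarith)
    · intro h
      have h2 : ((K ω + 1 : ℕ) : ℝ) ≤ (M:ℝ) := by exact_mod_cast h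
      push_cast at h2
      linarith
  rw [hEvent]
  rcases Nat.eq_zero_or_pos M with hM0 | hM0
  · have hempty : {ω | K ω + 1 ≤ M} = ∅ := by ext ω; simp [hM0]
    rw [hempty]
    simp
  set m := M - 1 with hmdef
  have hm1 : m + 1 = M := by omega
  have hMn : M ≤ n := by
    have h2 : α * ((n:ℝ)+1) < (n:ℝ)+1 := by nlinarith
    have h4 : M < n + 1 := by exact_mod_cast lt_of_le_of_lt hMle h2
    omega
  have hmn : m < n := by omega
  have hE2 : {ω | K ω + 1 ≤ M} = {ω | K ω ≤ m} := by
    ext ω; simp only [Set.mem_setOf_eq]; omega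
  rw [hE2]
  have hs : MeasurableSet {ω | K ω ≤ m} := hKmeas (measurableSet_Iic (a := m))
  set j := n - m - 1 with hjdef
  set c : ℝ := ((n - m : ℕ) : ℝ) * (n.choose m) with hcdef
  have hc0 : 0 ≤ c := by positivity
  set f : ℝ → ℝ := fun t => t^m * (1-t)^j with hfdef
  set J : ℝ → ℝ := fun p => ∫ t in p..1, f t with hJdef
  set g : Ω → ℝ := fun ω =>
    ∑ k ∈ Finset.range (m+1), (n.choose k : ℝ) * (π ω)^k * (1 - π ω)^(n-k) with hgdef
  have hmle : MeasurableSpace.comap π inferInstance ≤ mΩ := hπmeas.comap_le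
  have hindint : ∀ k : ℕ, Integrable (fun ω => if K ω = k then (1:ℝ) else 0) μ := by
    intro k
    have hsk : MeasurableSet {ω | K ω = k} := hKmeas (measurableSet_singleton k)
    have he : (fun ω => if K ω = k then (1:ℝ) else 0)
        = Set.indicator {ω | K ω = k} (fun _ => 1) := by
      funext ω; simp [Set.indicator_apply, Set.mem_setOf_eq]
    rw [he]
    exact (integrable_const 1).indicator hsk
  have hfsum : (fun ω => if K ω ≤ m then (1:ℝ) else 0)
      = fun ω => ∑ k ∈ Finset.range (m+1), (if K ω = k then (1:ℝ) else 0) := by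
    funext ω
    rw [Finset.sum_ite_eq (Finset.range (m+1)) (K ω) (fun _ => (1:ℝ))]
    simp [Finset.mem_range, Nat.lt_succ_iff]
  have hcond : μ[(fun ω => if K ω ≤ m then (1:ℝ) else 0)
      | MeasurableSpace.comap π inferInstance] =ᵐ[μ] g := by
    rw [hfsum]
    have hswap : (fun ω => ∑ k ∈ Finset.range (m+1), (if K ω = k then (1:ℝ) else 0))
        = ∑ k ∈ Finset.range (m+1), (fun ω => if K ω = k then (1:ℝ) else 0) := by
      funext ω; simp
    rw [hswap]
    refine (condExp_finset_sum (fun k _ => hindint k) _).trans ?_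
    refine (eventuallyEq_sum (s := Finset.range (m+1))
      (fun k _ => hbinom k)).trans (Filter.EventuallyEq.of_eq ?_)
    funext ω; simp [hgdef]
  have hfint : Integrable (fun ω => if K ω ≤ m then (1:ℝ) else 0) μ := by
    have he : (fun ω => if K ω ≤ m then (1:ℝ) else 0)
        = Set.indicator {ω | K ω ≤ m} (fun _ => 1) := by
      funext ω; simp [Set.indicator_apply, Set.mem_setOf_eq]
    rw [he]
    exact (integrable_const 1).indicator hs
  have hgint : Integrable g μ := integrable_condExp.congr hcond
  have hμint : (μ {ω | K ω ≤ m}).toReal = ∫ ω, g ω ∂μ := by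
    have h1 : ∫ ω, (if K ω ≤ m then (1:ℝ) else 0) ∂μ = (μ {ω | K ω ≤ m}).toReal := by
      have he : (fun ω => if K ω ≤ m then (1:ℝ) else 0)
          = Set.indicator {ω | K ω ≤ m} (1 : Ω → ℝ) := by
        funext ω; simp [Set.indicator_apply, Set.mem_setOf_eq]
      rw [show (∫ ω, (if K ω ≤ m then (1:ℝ) else 0) ∂μ)
        = ∫ ω, Set.indicator {ω | K ω ≤ m} (1 : Ω → ℝ) ω ∂μ from by rw [← he]]
      exact integral_indicator_one hs
    rw [← h1, ← integral_condExp hmle (f := fun ω => if K ω ≤ m then (1:ℝ) else 0)]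
    exact integral_congr_ae hcond
  have hgnn : ∀ ω, 0 ≤ g ω := by
    intro ω
    refine Finset.sum_nonneg fun k _ => ?_
    obtain ⟨h0, h1⟩ := hπ ω
    have : (0:ℝ) ≤ 1 - π ω := by linarith
    positivity
  have hgc : ∀ ω, g ω = c * J (π ω) := fun ω => binomCdf_eq n m hmn (π ω)
  have hfc : Continuous f := (continuous_pow m).mul ((continuous_const.sub continuous_id).pow j)
  set Fe : ℝ → ℝ≥0∞ := fun t => ENNReal.ofReal (f t) with hFedef
  have hFem : Measurable Fe := hfc.measurable.ennreal_ofReal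
  have hfnn : ∀ t ∈ Set.Ioc (0:ℝ) 1, 0 ≤ f t := by
    intro t ht
    have h1 : (0:ℝ) ≤ t := ht.1.le
    have h2 : (0:ℝ) ≤ 1 - t := by linarith [ht.2]
    positivity
  have hpoint : ∀ ω, ENNReal.ofReal (J (π ω))
      = ∫⁻ t in Set.Ioc (0:ℝ) 1, (Set.Ioi (π ω)).indicator Fe t := by
    intro ω
    obtain ⟨hp0, hp1⟩ := hπ ω
    have h1 : J (π ω) = ∫ t in Set.Ioc (π ω) 1, f t := intervalIntegral.integral_of_le hp1
    have h2 : ENNReal.ofReal (∫ t in Set.Ioc (π ω) 1, f t) = ∫⁻ t in Set.Ioc (π ω) 1, Fe t := by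
      refine ofReal_integral_eq_lintegral_ofReal hfc.integrableOn_Ioc ?_
      refine (ae_restrict_iff' measurableSet_Ioc).2 (Filter.Eventually.of_forall fun t ht => ?_)
      have h1 : (0:ℝ) ≤ t := le_trans hp0 ht.1.le
      have h2 : (0:ℝ) ≤ 1 - t := by linarith [ht.2]
      simp only [hfdef]
      positivity
    have h3 : Set.Ioi (π ω) ∩ Set.Ioc (0:ℝ) 1 = Set.Ioc (π ω) 1 := by
      ext t
      constructor
      · rintro ⟨ht1, _, ht3⟩; exact ⟨ht1, ht3⟩
      · rintro ⟨ht1, ht2⟩; exact ⟨ht1, lt_of_le_of_lt hp0 ht1, ht2⟩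
    rw [h1, h2, lintegral_indicator measurableSet_Ioi,
      Measure.restrict_restrict measurableSet_Ioi, h3]
  have hinner : ∀ t : ℝ, ∫⁻ ω, (Set.Ioi (π ω)).indicator Fe t ∂μ = Fe t * μ {ω | π ω < t} := by
    intro t
    have he : (fun ω => (Set.Ioi (π ω)).indicator Fe t)
        = ({ω | π ω < t}).indicator (fun _ => Fe t) := by
      funext ω; simp only [Set.indicator_apply, Set.mem_Ioi, Set.mem_setOf_eq]
    have hms : MeasurableSet {ω | π ω < t} := hπmeas measurableSet_Iio
    rw [he, lintegral_indicator_const hms]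
  have hmeasprod : AEMeasurable
      (Function.uncurry fun ω t => (Set.Ioi (π ω)).indicator Fe t)
      (μ.prod (volume.restrict (Set.Ioc (0:ℝ) 1))) := by
    have huncurry : (Function.uncurry fun ω t => (Set.Ioi (π ω)).indicator Fe t)
        = Set.indicator {q : Ω × ℝ | π q.1 < q.2} (fun q => Fe q.2) := by
      funext q
      simp only [Function.uncurry, Set.indicator_apply, Set.mem_Ioi, Set.mem_setOf_eq]
    rw [huncurry]
    exact ((hFem.comp measurable_snd).indicator
      (measurableSet_lt (hπmeas.comp measurable_fst) measurable_snd)).aemeasurable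
  have hbound : ∫⁻ t in Set.Ioc (0:ℝ) 1, Fe t * μ {ω | π ω < t} ∂volume
      ≤ ∫⁻ t in Set.Ioc (0:ℝ) 1, ENNReal.ofReal (f t * t) ∂volume := by
    refine setLIntegral_mono' measurableSet_Ioc fun t ht => ?_
    have hμt : μ {ω | π ω < t} ≤ ENNReal.ofReal t := by
      rcases lt_or_eq_of_le ht.2 with h | h
      · exact le_trans (measure_mono fun ω (hω : π ω < t) => le_of_lt hω)
          (hsuper t ⟨ht.1, h⟩)
      · calc μ {ω | π ω < t} ≤ μ Set.univ := measure_mono (Set.subset_univ _)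
          _ = 1 := measure_univ
          _ = ENNReal.ofReal t := by rw [h]; simp
    calc Fe t * μ {ω | π ω < t} ≤ Fe t * ENNReal.ofReal t := mul_le_mul_right hμt _
      _ = ENNReal.ofReal (f t * t) := by rw [← ENNReal.ofReal_mul (hfnn t ht)]
  have hI : ∫ t in (0:ℝ)..1, t^(m+1)*(1-t)^j = 1 / (((n-m:ℕ):ℝ) * ((n+1).choose (m+1))) := by
    have hA := binomCdf_eq (n+1) (m+1) (by omega) 0
    rw [show n+1-(m+1)-1 = j from by omega, show n+1-(m+1) = n-m from by omega] at hA
    have hsum1 : ∑ k ∈ Finset.range (m+1+1), ((n+1).choose k : ℝ) * (0:ℝ)^k * (1-0)^(n+1-k) = 1 := by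
      rw [Finset.sum_eq_single 0]
      · simp
      · intro k _ hk0; rw [zero_pow hk0]; ring
      · intro h; exact absurd (Finset.mem_range.2 (by omega)) h
    rw [hsum1] at hA
    have hnm0 : (0:ℝ) < ((n-m:ℕ):ℝ) := by
      exact_mod_cast Nat.cast_pos.2 (by omega : 0 < n - m)
    have hch0 : (0:ℝ) < (((n+1).choose (m+1)):ℝ) :=
      Nat.cast_pos.2 (Nat.choose_pos (by omega))
    rw [eq_div_iff (by positivity)]
    linear_combination -hA
  have hfinal : ∫⁻ t in Set.Ioc (0:ℝ) 1, ENNReal.ofReal (f t * t) ∂volume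
      = ENNReal.ofReal (1 / (((n-m:ℕ):ℝ) * ((n+1).choose (m+1)))) := by
    have he : ∀ t : ℝ, f t * t = t^(m+1)*(1-t)^j := by
      intro t; simp only [hfdef]; ring
    have hcont : Continuous (fun t : ℝ => f t * t) := hfc.mul continuous_id
    rw [← ofReal_integral_eq_lintegral_ofReal hcont.integrableOn_Ioc
      ((ae_restrict_iff' measurableSet_Ioc).2 (Filter.Eventually.of_forall fun t ht =>
        mul_nonneg (hfnn t ht) ht.1.le))]
    rw [← intervalIntegral.integral_of_le (by norm_num : (0:ℝ) ≤ 1)]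
    rw [show (∫ t in (0:ℝ)..1, f t * t) = ∫ t in (0:ℝ)..1, t^(m+1)*(1-t)^j from by
      simp only [he]]
    rw [hI]
  -- key numeric inequality
  have hkey : c * (1 / (((n-m:ℕ):ℝ) * ((n+1).choose (m+1)))) ≤ α := by
    have hch := Nat.add_one_mul_choose_eq n m
    have hchR : ((n:ℝ)+1) * (n.choose m) = (((n+1).choose (m+1)):ℝ) * ((m:ℝ)+1) := by
      exact_mod_cast congrArg (Nat.cast : ℕ → ℝ) hch
    have hnm0 : (0:ℝ) < ((n-m:ℕ):ℝ) :=
      by exact_mod_cast Nat.cast_pos.2 (by omega : 0 < n - m)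
    have hch0 : (0:ℝ) < (((n+1).choose (m+1)):ℝ) :=
      Nat.cast_pos.2 (Nat.choose_pos (by omega))
    have heq : c * (1 / (((n-m:ℕ):ℝ) * ((n+1).choose (m+1)))) = ((m:ℝ)+1)/((n:ℝ)+1) := by
      rw [hcdef]
      field_simp
      linear_combination hchR
    rw [heq, div_le_iff₀ hn1]
    have hm1R : ((m:ℝ)+1) = (M:ℝ) := by exact_mod_cast congrArg (Nat.cast : ℕ → ℝ) hm1
    linarith
  -- main chain
  calc μ {ω | K ω ≤ m}
      = ENNReal.ofReal ((μ {ω | K ω ≤ m}).toReal) :=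
        (ENNReal.ofReal_toReal (measure_ne_top μ _)).symm
    _ = ENNReal.ofReal (∫ ω, g ω ∂μ) := by rw [hμint]
    _ = ∫⁻ ω, ENNReal.ofReal (g ω) ∂μ :=
        ofReal_integral_eq_lintegral_ofReal hgint (Filter.Eventually.of_forall hgnn)
    _ = ∫⁻ ω, ENNReal.ofReal c * ENNReal.ofReal (J (π ω)) ∂μ := by
        refine lintegral_congr fun ω => ?_
        rw [hgc ω, ENNReal.ofReal_mul hc0]
    _ = ENNReal.ofReal c * ∫⁻ ω, ENNReal.ofReal (J (π ω)) ∂μ :=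
        lintegral_const_mul' _ _ ENNReal.ofReal_ne_top
    _ = ENNReal.ofReal c *
        ∫⁻ ω, ∫⁻ t in Set.Ioc (0:ℝ) 1, (Set.Ioi (π ω)).indicator Fe t ∂volume ∂μ := by
        rw [lintegral_congr fun ω => hpoint ω]
    _ = ENNReal.ofReal c *
        ∫⁻ t in Set.Ioc (0:ℝ) 1, ∫⁻ ω, (Set.Ioi (π ω)).indicator Fe t ∂μ ∂volume := by
        rw [lintegral_lintegral_swap hmeasprod]
    _ = ENNReal.ofReal c * ∫⁻ t in Set.Ioc (0:ℝ) 1, Fe t * μ {ω | π ω < t} ∂volume := by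
        rw [lintegral_congr fun t => hinner t]
    _ ≤ ENNReal.ofReal c * ∫⁻ t in Set.Ioc (0:ℝ) 1, ENNReal.ofReal (f t * t) ∂volume :=
        mul_le_mul_right hbound _
    _ = ENNReal.ofReal c * ENNReal.ofReal (1 / (((n-m:ℕ):ℝ) * ((n+1).choose (m+1)))) := by
        rw [hfinal]
    _ = ENNReal.ofReal (c * (1 / (((n-m:ℕ):ℝ) * ((n+1).choose (m+1))))) :=
        (ENNReal.ofReal_mul hc0).symm
    _ ≤ ENNReal.ofReal α := ENNReal.ofReal_le_ofReal hkey
end
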